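/- Let L be an effect algebra and μ : L → ℝ an additive measure. If μ is bounded (sup_{a∈L} |μ(a)| < ∞), then μ is exhaustive: for every orthogonal sequence (a_n) in L, μ(a_n) → 0. -/

import Mathlib

open Filter Topology
open scoped ENNReal NNReal

/-- An effect algebra: a partial commutative monoid with orthosupplementation
and the zero-one law. `D a b` means `a ⊕ b` is defined; `add` is the (junk-valued
outside `D`) total extension of `⊕`. -/
structure EffectAlgebra (L : Type*) where
  D : L → L → Prop
  add : L → L → L
  zero : L
  one : L
  comm_def : ∀ {a b}, D a b → D b a
  comm : ∀ {a b}, D a b → add a b = add b a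
  assoc_def₁ : ∀ {a b c}, D b c → D a (add b c) → D a b
  assoc_def₂ : ∀ {a b c}, D b c → D a (add b c) → D (add a b) c
  assoc : ∀ {a b c}, D b c → D a (add b c) → add (add a b) c = add a (add b c)
  orth : ∀ a, ∃! a', D a a' ∧ add a a' = one
  zero_one : ∀ {a}, D one a → a = zero

namespace EffectAlgebra

variable {L : Type*}

/-- The canonical order: `a ≤ b` iff `a ⊕ r = b` for some `r`. -/
def le (E : EffectAlgebra L) (a b : L) : Prop := ∃ r, E.D a r ∧ E.add a r = b

/-- The orthosupplement `1 ⊖ a`. -/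
noncomputable def compl (E : EffectAlgebra L) (a : L) : L := (E.orth a).choose

/-- Partial sums `a 0 ⊕ ⋯ ⊕ a n`. -/
def psum (E : EffectAlgebra L) (a : ℕ → L) : ℕ → L
  | 0 => a 0
  | n + 1 => E.add (E.psum a n) (a (n + 1))

/-- A sequence is orthogonal when all its finite orthosums are defined. -/
def Orthogonal (E : EffectAlgebra L) (a : ℕ → L) : Prop :=
  ∀ n, E.D (E.psum a n) (a (n + 1))

/-- `s` is the supremum of the set `S` in the canonical order. -/
def IsSup (E : EffectAlgebra L) (S : Set L) (s : L) : Prop :=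
  (∀ x ∈ S, E.le x s) ∧ ∀ u, (∀ x ∈ S, E.le x u) → E.le s u

/-- `s = ⊕ₙ a n`: the sequence is orthogonal and `s` is the sup of the finite orthosums. -/
def IsOrthoSum (E : EffectAlgebra L) (a : ℕ → L) (s : L) : Prop :=
  E.Orthogonal a ∧ E.IsSup (Set.range (E.psum a)) s

/-- Additive (finitely additive) measure. -/
def IsMeasure {G : Type*} [AddCommMonoid G] (E : EffectAlgebra L) (μ : L → G) : Prop :=
  ∀ a b, E.D a b → μ (E.add a b) = μ a + μ b

/-- σ-additivity: `μ (⊕ₙ a n) = Σₙ μ (a n)` whenever the orthosum exists. -/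
def SigmaAdditive {G : Type*} [AddCommMonoid G] [TopologicalSpace G]
    (E : EffectAlgebra L) (μ : L → G) : Prop :=
  ∀ a s, E.IsOrthoSum a s →
    Tendsto (fun n => ∑ k ∈ Finset.range n, μ (a k)) atTop (𝓝 (μ s))

/-- Exhaustivity: `μ (a n) → 0` along every orthogonal sequence. -/
def Exhaustive {G : Type*} [AddCommMonoid G] [TopologicalSpace G]
    (E : EffectAlgebra L) (μ : L → G) : Prop :=
  ∀ a, E.Orthogonal a → Tendsto (fun n => μ (a n)) atTop (𝓝 0)

/-- A generator: every element is the sup of an increasing sequence from `B`. -/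
def IsGenerator (E : EffectAlgebra L) (B : Set L) : Prop :=
  ∀ a : L, ∃ b : ℕ → L, (∀ n, b n ∈ B) ∧ (∀ n, E.le (b n) (b (n + 1)))
    ∧ E.IsSup (Set.range b) a

/-- Riesz decomposition property. -/
def RDP (E : EffectAlgebra L) : Prop :=
  ∀ a b c, E.D a b → E.le c (E.add a b) →
    ∃ c₁ c₂, E.D c₁ c₂ ∧ E.add c₁ c₂ = c ∧ E.le c₁ a ∧ E.le c₂ b

/-- Strong Riesz decomposition property. -/
def sRDP (E : EffectAlgebra L) : Prop :=
  ∀ (a : ℕ → L) (s c : L), E.IsOrthoSum a s → E.le c s →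
    ∃ c' : ℕ → L, E.IsOrthoSum c' c ∧ ∀ n, E.le (c' n) (a n)

/-- A natural basis: an orthogonal sequence of minimal nonzero elements with orthosum `1`. -/
def IsNaturalBasis (E : EffectAlgebra L) (b : ℕ → L) : Prop :=
  E.IsOrthoSum b E.one ∧
  ∀ n, b n ≠ E.zero ∧ ∀ c, c ≠ E.zero → E.le c (b n) → c = b n

/-- The set of finite orthosums of elements of the sequence `b`. -/
def finOrthosums (E : EffectAlgebra L) (b : ℕ → L) : Set L :=
  { x | ∃ c : ℕ → L, (∀ n, c n = b n ∨ c n = E.zero) ∧ E.Orthogonal c ∧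
        ∃ N, x = E.psum c N }

/-- A sequence of measures is pointwise convergent. -/
def PtwiseConv (μ : ℕ → L → ℝ) : Prop :=
  ∀ a : L, ∃ x : ℝ, Tendsto (fun i => μ i a) atTop (𝓝 x)

/-- Uniform exhaustivity of a sequence of measures. -/
def UnifExhaustive (E : EffectAlgebra L) (μ : ℕ → L → ℝ) : Prop :=
  ∀ a, E.Orthogonal a →
    TendstoUniformly (fun n (i : ℕ) => μ i (a n)) (fun _ => (0 : ℝ)) atTop

/-- Uniform strong additivity of a sequence of measures. -/
def UnifStronglyAdditive (E : EffectAlgebra L) (μ : ℕ → L → ℝ) : Prop :=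
  ∀ a, E.Orthogonal a → ∃ f : ℕ → ℝ,
    TendstoUniformly (fun n (i : ℕ) => ∑ k ∈ Finset.range n, μ i (a k)) f atTop

/-- The Nikodym property. -/
def Nikodym (E : EffectAlgebra L) : Prop :=
  ∀ μ : ℕ → L → ℝ, (∀ i, E.IsMeasure (μ i)) → (∀ i, ∃ M, ∀ a, |μ i a| ≤ M) →
    (∀ a : L, ∃ M, ∀ i, |μ i a| ≤ M) → ∃ M, ∀ i, ∀ a : L, |μ i a| ≤ M

/-- The Grothendieck property. -/
def Grothendieck (E : EffectAlgebra L) : Prop :=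
  ∀ μ : ℕ → L → ℝ, (∀ i, E.IsMeasure (μ i)) → (∀ i, ∃ M, ∀ a, |μ i a| ≤ M) →
    PtwiseConv μ → (∃ M, ∀ i, ∀ a : L, |μ i a| ≤ M) → E.UnifStronglyAdditive μ

/-- The Vitali-Hahn-Saks property. -/
def VHS (E : EffectAlgebra L) : Prop :=
  ∀ μ : ℕ → L → ℝ, (∀ i, E.IsMeasure (μ i)) → (∀ i, ∃ M, ∀ a, |μ i a| ≤ M) →
    PtwiseConv μ → E.UnifExhaustive μ

/-- The σ-Nikodym property. -/
def SigmaNikodym (E : EffectAlgebra L) : Prop :=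
  ∀ μ : ℕ → L → ℝ, (∀ i, E.IsMeasure (μ i)) → (∀ i, E.SigmaAdditive (μ i)) →
    (∀ i, ∃ M, ∀ a, |μ i a| ≤ M) →
    (∀ a : L, ∃ M, ∀ i, |μ i a| ≤ M) → ∃ M, ∀ i, ∀ a : L, |μ i a| ≤ M

/-- The σ-Vitali-Hahn-Saks property. -/
def SigmaVHS (E : EffectAlgebra L) : Prop :=
  ∀ μ : ℕ → L → ℝ, (∀ i, E.IsMeasure (μ i)) → (∀ i, E.SigmaAdditive (μ i)) →
    (∀ i, ∃ M, ∀ a, |μ i a| ≤ M) → PtwiseConv μ → E.UnifExhaustive μ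

/-- A bounding subset. -/
def Bounding (E : EffectAlgebra L) (B : Set L) : Prop :=
  ∀ (G : Type) [NormedAddCommGroup G], ∀ μ : ℕ → L → G,
    (∀ i, E.IsMeasure (μ i)) → (∀ i, E.SigmaAdditive (μ i)) →
    (∀ a : L, ∃ M, ∀ i, ‖μ i a‖ ≤ M) →
    ((∃ M, ∀ i, ∀ b ∈ B, ‖μ i b‖ ≤ M) ↔ (∃ M, ∀ i, ∀ a : L, ‖μ i a‖ ≤ M))

/-- A natural subset: a generator closed under orthosums of orthogonal pairs all of whose
orthogonal-complement slices are bounding. -/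
def NaturalSubset (E : EffectAlgebra L) (B : Set L) : Prop :=
  E.IsGenerator B ∧ (∀ b ∈ B, ∀ c ∈ B, E.D b c → E.add b c ∈ B) ∧
    ∀ b ∈ B, E.Bounding {c ∈ B | E.D c b}

/-- A natural effect algebra: one admitting a natural subset. -/
def Natural (E : EffectAlgebra L) : Prop := ∃ B, E.NaturalSubset B

/-- The orthogonally sequential property. -/
def OSP (E : EffectAlgebra L) : Prop :=
  ∀ b : ℕ → L, ∃ c : ℕ → L, E.Orthogonal c ∧ (∀ k, E.le (c k) (b k)) ∧
    ∀ (a : L) (k₀ : ℕ), E.le a (b k₀) → (∀ i, i ≠ k₀ → E.le (b i) (E.compl a)) →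
      E.le a (c k₀)

/-- The subsequential interpolation property. -/
def SIP (E : EffectAlgebra L) : Prop :=
  ∀ a : ℕ → L, E.Orthogonal a → ∀ M : Set ℕ, M.Infinite →
    ∃ (x : L) (N : Set ℕ), N ⊆ M ∧ N.Infinite ∧ (∀ n ∈ N, E.le (a n) x) ∧
      ∀ n ∉ N, E.le (a n) (E.compl x)

/-- Iterated orthosum starting from `x`: all steps defined. -/
def OrthoFrom (E : EffectAlgebra L) : L → List L → Prop
  | _, [] => True
  | x, y :: ys => E.D x y ∧ E.OrthoFrom (E.add x y) ys

/-- The orthosum `x ⊕ y₁ ⊕ ⋯ ⊕ yₙ` of a nonempty list. -/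
def psumList (E : EffectAlgebra L) : L → List L → L
  | x, [] => x
  | x, y :: ys => E.psumList (E.add x y) ys

/-- The variation of a measure: the sup over finite decompositions
`e = e₁ ⊕ ⋯ ⊕ eₙ` of `Σ ‖μ eᵢ‖`, valued in `[0,∞]`. -/
noncomputable def variation {G : Type*} [NormedAddCommGroup G]
    (E : EffectAlgebra L) (μ : L → G) (e : L) : ℝ≥0∞ :=
  sSup { v : ℝ≥0∞ | ∃ (x : L) (xs : List L), E.OrthoFrom x xs ∧ E.psumList x xs = e ∧
    v = ((x :: xs).map fun y => (‖μ y‖₊ : ℝ≥0∞)).sum }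

section Aux

variable {L : Type*} (E : EffectAlgebra L)

private lemma one_zero : E.D E.one E.zero ∧ E.add E.one E.zero = E.one := by
  obtain ⟨c, ⟨hd, ha⟩, _⟩ := E.orth E.one
  have hc : c = E.zero := E.zero_one hd
  rw [← hc]; exact ⟨hd, ha⟩

private lemma D_zero (a : L) : E.D E.zero a := by
  obtain ⟨a', ⟨hd, ha⟩, _⟩ := E.orth a
  have h1 : E.D E.one E.zero := (one_zero E).1
  rw [← ha] at h1
  exact E.assoc_def₁ hd (E.comm_def h1)

private lemma zero_add (a : L) : E.add E.zero a = a := by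
  obtain ⟨a', ⟨hd, ha⟩, _⟩ := E.orth a
  obtain ⟨x, _, huniq⟩ := E.orth a'
  have hz1 : E.D E.one E.zero := (one_zero E).1
  have h01 : E.D E.zero E.one := E.comm_def hz1
  have h0aa' : E.D E.zero (E.add a a') := by rw [ha]; exact h01
  have hD0a : E.D E.zero a := D_zero E a
  have hD : E.D (E.add E.zero a) a' := E.assoc_def₂ hd h0aa'
  have heq : E.add (E.add E.zero a) a' = E.one := by
    rw [E.assoc hd h0aa', ha, E.comm h01, (one_zero E).2]
  have c1 : E.D a' (E.add E.zero a) ∧ E.add a' (E.add E.zero a) = E.one :=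
    ⟨E.comm_def hD, by rw [E.comm (E.comm_def hD)]; exact heq⟩
  have c2 : E.D a' a ∧ E.add a' a = E.one :=
    ⟨E.comm_def hd, by rw [E.comm (E.comm_def hd)]; exact ha⟩
  rw [huniq _ c1, huniq _ c2]

private lemma add_zero (a : L) : E.add a E.zero = a := by
  rw [E.comm (E.comm_def (D_zero E a)), zero_add]

private lemma mu_zero {μ : L → ℝ} (hμ : E.IsMeasure μ) : μ E.zero = 0 := by
  have := hμ E.zero E.zero (D_zero E E.zero)
  rw [zero_add] at this; linarith

private lemma le_refl (a : L) : E.le a a :=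
  ⟨E.zero, E.comm_def (D_zero E a), add_zero E a⟩

private lemma le_trans {x y z : L} (h1 : E.le x y) (h2 : E.le y z) : E.le x z := by
  obtain ⟨r, hxr, rfl⟩ := h1
  obtain ⟨s, hys, rfl⟩ := h2
  have h1s : E.D s (E.add x r) := E.comm_def hys
  have h1' : E.D s (E.add r x) := by rwa [E.comm hxr] at h1s
  have h2s : E.D s r := E.assoc_def₁ (E.comm_def hxr) h1'
  have h2' : E.D r s := E.comm_def h2s
  have h3 : E.D (E.add s r) x := E.assoc_def₂ (E.comm_def hxr) h1'
  have h4 : E.D x (E.add r s) := by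
    have := E.comm_def h3; rwa [E.comm h2s] at this
  exact ⟨E.add r s, h4, (E.assoc h2' h4).symm⟩

private lemma monoLe {x y u : L} (hxy : E.D x y) (h : E.le u x) :
    E.D u y ∧ E.le (E.add u y) (E.add x y) := by
  obtain ⟨r, hur, rfl⟩ := h
  have h1 : E.D y (E.add u r) := E.comm_def hxy
  have h2 : E.D y u := E.assoc_def₁ hur h1
  have h3 : E.D u y := E.comm_def h2
  have h4 : E.D (E.add y u) r := E.assoc_def₂ hur h1
  have h5 : E.D r (E.add y u) := E.comm_def h4
  have h7 : E.D r y := E.assoc_def₁ h2 h5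
  have h8 : E.D u (E.add r y) := E.comm_def (E.assoc_def₂ h2 h5)
  have h9 : E.D y r := E.comm_def h7
  have h8' : E.D u (E.add y r) := by rwa [E.comm h7] at h8
  have hD : E.D (E.add u y) r := E.assoc_def₂ h9 h8'
  refine ⟨h3, ⟨r, hD, ?_⟩⟩
  rw [E.assoc h9 h8', E.comm h9, ← E.assoc h7 h8]

/-- Selection lemma: replacing some entries of an orthogonal sequence by zero keeps
the partial sums defined and dominated. -/
private lemma select {a c : ℕ → L} (ha : E.Orthogonal a)
    (hc : ∀ k, c k = a k ∨ c k = E.zero) :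
    ∀ n, E.le (E.psum c n) (E.psum a n) ∧ E.D (E.psum c n) (c (n + 1)) := by
  intro n
  induction n with
  | zero =>
    have hle : E.le (E.psum c 0) (E.psum a 0) := by
      rcases hc 0 with h | h <;> simp only [EffectAlgebra.psum, h]
      · exact le_refl E _
      · exact ⟨a 0, D_zero E _, zero_add E _⟩
    refine ⟨hle, ?_⟩
    rcases hc 1 with h | h
    · rw [h]; exact (monoLe E (ha 0) hle).1
    · rw [h]; exact E.comm_def (D_zero E _)
  | succ n ih =>
    obtain ⟨hle, hD⟩ := ih
    have hle' : E.le (E.psum c (n + 1)) (E.psum a (n + 1)) := by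
      rcases hc (n + 1) with h | h
      · simp only [EffectAlgebra.psum, h]
        exact (monoLe E (ha n) hle).2
      · have : E.psum c (n + 1) = E.psum c n := by
          simp only [EffectAlgebra.psum, h, add_zero E]
        rw [this]
        exact le_trans E hle ⟨a (n + 1), ha n, rfl⟩
    refine ⟨hle', ?_⟩
    rcases hc (n + 2) with h | h
    · rw [h]; exact (monoLe E (ha (n + 1)) hle').1
    · rw [h]; exact E.comm_def (D_zero E _)

private lemma mu_psum {μ : L → ℝ} (hμ : E.IsMeasure μ) {a c : ℕ → L}
    (ha : E.Orthogonal a) (hc : ∀ k, c k = a k ∨ c k = E.zero) :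
    ∀ n, μ (E.psum c n) = ∑ k ∈ Finset.range (n + 1), μ (c k) := by
  intro n
  induction n with
  | zero => simp [EffectAlgebra.psum]
  | succ n ih =>
    have hD := (select E ha hc n).2
    simp only [EffectAlgebra.psum]
    rw [hμ _ _ hD, ih]
    simp [Finset.sum_range_succ]

end Aux

end EffectAlgebra

open EffectAlgebra in
/-- A bounded real-valued measure on an effect algebra is exhaustive. -/
theorem stmt4 {L : Type*} (E : EffectAlgebra L) (μ : L → ℝ) (hμ : E.IsMeasure μ)
    (hb : ∃ M : ℝ, ∀ a : L, |μ a| ≤ M) : E.Exhaustive μ := by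
  obtain ⟨M, hM⟩ := hb
  intro a ha
  set f : ℕ → ℝ := fun k => μ (a k) with hf
  -- positive part
  have key : ∀ s : ℕ → Prop, ∀ n, [DecidablePred s] →
      |∑ k ∈ Finset.range (n + 1), (if s k then f k else 0)| ≤ M := by
    intro s n _
    set c : ℕ → L := fun k => if s k then a k else E.zero with hcdef
    have hc : ∀ k, c k = a k ∨ c k = E.zero := by
      intro k; by_cases h : s k <;> simp [hcdef, h]
    have hsum := mu_psum E hμ ha hc n
    have hterm : ∀ k, μ (c k) = (if s k then f k else 0) := by
      intro k; by_cases h : s k <;> simp [hcdef, h, mu_zero E hμ, hf]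
    calc |∑ k ∈ Finset.range (n + 1), (if s k then f k else 0)|
        = |μ (E.psum c n)| := by
            rw [hsum]
            congr 1
            exact Finset.sum_congr rfl fun k _ => (hterm k).symm
      _ ≤ M := hM _
  have hMnonneg : 0 ≤ M := le_trans (abs_nonneg _) (hM E.zero)
  have boundP : ∀ n, ∑ k ∈ Finset.range n, max (f k) 0 ≤ M := by
    intro n
    have hmono : ∑ k ∈ Finset.range n, max (f k) 0 ≤
        ∑ k ∈ Finset.range (n + 1), max (f k) 0 :=
      Finset.sum_le_sum_of_subset_of_nonneg
        (Finset.range_subset_range.2 (Nat.le_succ n)) (fun i _ _ => le_max_right _ _)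
    have := key (fun k => 0 ≤ f k) n
    have heq : ∑ k ∈ Finset.range (n + 1), (if 0 ≤ f k then f k else 0) =
        ∑ k ∈ Finset.range (n + 1), max (f k) 0 := by
      refine Finset.sum_congr rfl fun k _ => ?_
      by_cases h : 0 ≤ f k
      · simp [h, max_eq_left h]
      · push_neg at h
        simp [not_le.2 h, max_eq_right h.le]
    rw [heq] at this
    exact hmono.trans ((le_abs_self _).trans this)
  have boundN : ∀ n, ∑ k ∈ Finset.range n, max (-f k) 0 ≤ M := by
    intro n
    have hmono : ∑ k ∈ Finset.range n, max (-f k) 0 ≤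
        ∑ k ∈ Finset.range (n + 1), max (-f k) 0 :=
      Finset.sum_le_sum_of_subset_of_nonneg
        (Finset.range_subset_range.2 (Nat.le_succ n)) (fun i _ _ => le_max_right _ _)
    have := key (fun k => f k ≤ 0) n
    have heq : ∑ k ∈ Finset.range (n + 1), (if f k ≤ 0 then f k else 0) =
        -∑ k ∈ Finset.range (n + 1), max (-f k) 0 := by
      rw [← Finset.sum_neg_distrib]
      refine Finset.sum_congr rfl fun k _ => ?_
      rcases le_total (f k) 0 with h | h
      · simp [h, max_eq_left, neg_nonneg.2 h]
      · have : max (-f k) 0 = 0 := max_eq_right (neg_nonpos.2 h)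
        by_cases h0 : f k ≤ 0
        · have : f k = 0 := le_antisymm h0 h
          simp [h0, this]
        · simp [h0, this]
    rw [heq, abs_neg] at this
    exact hmono.trans ((le_abs_self _).trans this)
  have sP : Summable (fun k => max (f k) 0) :=
    summable_of_sum_range_le (fun k => le_max_right _ _) boundP
  have sN : Summable (fun k => max (-f k) 0) :=
    summable_of_sum_range_le (fun k => le_max_right _ _) boundN
  have tP := sP.tendsto_atTop_zero
  have tN := sN.tendsto_atTop_zero
  have : Tendsto (fun k => max (f k) 0 - max (-f k) 0) atTop (𝓝 (0 - 0)) :=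
    tP.sub tN
  rw [sub_zero] at this
  convert this using 2 with k
  rcases le_total 0 (f k) with h | h
  · rw [max_eq_left h, max_eq_right (neg_nonpos.2 h), sub_zero]
  · rw [max_eq_right h, max_eq_left (neg_nonneg.2 h), zero_sub, neg_neg]
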